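/- arXiv:2510.08134 — 4 statements merged into one kernel-verified Lean document; each statement's English description precedes it below -/
import Mathlib

section
/- The stability function Φ(z) = 1/(1 - z + z²/4) satisfies |Φ(z)| ≤ 1 for every complex number z with Re(z) ≤ 0. -/
/-- A-stability of the CS-EBT2 stability function: `|Φ(z)| ≤ 1` for `Re z ≤ 0`,
where `Φ(z) = (1 - z + z²/4)⁻¹`. -/
theorem cs_ebt2_A_stable (z : ℂ) (hz : z.re ≤ 0) :
    ‖(1 - z + z ^ 2 / 4)⁻¹‖ ≤ 1 := by
  have hfac : 1 - z + z ^ 2 / 4 = (1 - z / 2) ^ 2 := by ring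
  have h1 : (1 : ℝ) ≤ ‖1 - z / 2‖ := by
    have := Complex.sq_norm (1 - z / 2)
    have hre : (1 - z / 2).re = 1 - z.re / 2 := by simp
    nlinarith [Complex.normSq_apply (1 - z / 2), Complex.sq_norm (1 - z / 2),
      norm_nonneg (1 - z / 2), sq_nonneg (1 - z / 2).im, sq_nonneg (z.re)]
  rw [hfac, norm_inv, norm_pow]
  have : (1 : ℝ) ≤ ‖1 - z / 2‖ ^ 2 := by nlinarith
  rw [inv_le_one_iff₀] at *
  right; exact this
end

section
/- Applying the CS-EBT2 time discretization to the scalar linear test equation y' = λ₁ y + λ₂ y, treating λ₁ y explicitly and λ₂ y implicitly, yields the one-step recurrence y_{n+1} = Φ(z₁, z₂) y_n with amplification factor Φ(z₁, z₂) = [1 + z₁(2 + z₁)/(2 - z₂) - z₁ z₂ / 4] / (1 - z₂ + z₂²/4), where z₁ = λ₁ Δt and z₂ = λ₂ Δt. That is, if y_half satisfies y_half = y_n + (z₁/2) y_n + (z₂/2) y_half and y_{n+1} satisfies y_{n+1} = y_n + z₁ y_half + z₂ y_{n+1} - (z₂/4)(z₂ y_{n+1} + z₁ y_n), then y_{n+1}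 = Φ(z₁, z₂) y_n, provided z₂ ≠ 2 and 1 - z₂ + z₂²/4 ≠ 0. -/
/-- The CS-EBT2 scheme applied to `y' = λ₁ y + λ₂ y` (λ₁ explicit, λ₂ implicit) yields
`y_{n+1} = Φ(z₁,z₂) y_n` with
`Φ(z₁,z₂) = (1 + z₁(2+z₁)/(2-z₂) - z₁z₂/4) / (1 - z₂ + z₂²/4)`. -/
theorem cs_ebt2_amplification (yn yhalf yn1 z1 z2 : ℂ)
    (hz2 : z2 ≠ 2) (hden : 1 - z2 + z2 ^ 2 / 4 ≠ 0)
    (hpred : yhalf = yn + (z1 / 2) * yn + (z2 / 2) * yhalf)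
    (hcorr : yn1 = yn + z1 * yhalf + z2 * yn1 - (z2 / 4) * (z2 * yn1 + z1 * yn)) :
    yn1 = ((1 + z1 * (2 + z1) / (2 - z2) - z1 * z2 / 4) / (1 - z2 + z2 ^ 2 / 4)) * yn := by
  have h2 : (2 : ℂ) - z2 ≠ 0 := sub_ne_zero.mpr (Ne.symm hz2)
  have hh : yhalf * (2 - z2) = (2 + z1) * yn := by linear_combination 2 * hpred
  have key : yn1 * (4 - 4 * z2 + z2 ^ 2) * (2 - z2) =
      ((2 - z2) * 4 + z1 * (2 + z1) * 4 - z1 * z2 * (2 - z2)) * yn := by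
    linear_combination (4 * (2 - z2)) * hcorr + (4 * z1) * hh
  rw [div_mul_eq_mul_div, eq_div_iff hden]
  field_simp [h2]
  linear_combination key
end

section
/- Second-order consistency of the trapezoidal-with-backward-Taylor source quadrature: let g : ℝ → ℝ be twice continuously differentiable and y : [0, T] → ℝ twice continuously differentiable. Then ∫_{t}^{t+Δt} g(y(s)) ds = (Δt/2)·[2 g(y(t+Δt)) - Δt · g'(y(t))·y'(t+Δt)] + O(Δt³) as Δt → 0⁺; precisely, there exist constants C, δ > 0 such that for all 0 < Δt < δ the difference is bounded by C·Δt³. -/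
open intervalIntegral

/-- Second-order consistency of the trapezoidal rule combined with the backward
semi-implicit Taylor expansion used for the CS-EBT2 source quadrature. -/
theorem cs_ebt2_source_quadrature_consistency (g y : ℝ → ℝ) (t : ℝ)
    (hg : ContDiff ℝ 2 g) (hy : ContDiff ℝ 2 y) :
    ∃ C δ : ℝ, 0 < C ∧ 0 < δ ∧ ∀ Δt : ℝ, 0 < Δt → Δt < δ →
      |(∫ s in t..(t + Δt), g (y s))
        - (Δt / 2) * (2 * g (y (t + Δt)) - Δt * deriv g (y t) * deriv y (t + Δt))|
      ≤ C * Δt ^ 3 := by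
  -- smoothness facts
  have hy' : ContDiff ℝ 1 (deriv y) := by
    have h2 : ContDiff ℝ (1 + 1 : ℕ) y := by exact_mod_cast hy
    exact (contDiff_succ_iff_deriv.mp (by exact_mod_cast h2)).2.2
  have hg' : ContDiff ℝ 1 (deriv g) := by
    have h2 : ContDiff ℝ (1 + 1 : ℕ) g := by exact_mod_cast hg
    exact (contDiff_succ_iff_deriv.mp (by exact_mod_cast h2)).2.2
  have hyd : Differentiable ℝ y := hy.differentiable (by norm_num)
  have hgd : Differentiable ℝ g := hg.differentiable (by norm_num)
  have hyd2 : Differentiable ℝ (deriv y) := hy'.differentiable (by norm_num)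
  have hgd2 : Differentiable ℝ (deriv g) := hg'.differentiable (by norm_num)
  have hycont2 : Continuous (deriv (deriv y)) := (contDiff_one_iff_deriv.mp hy').2
  have hgcont2 : Continuous (deriv (deriv g)) := (contDiff_one_iff_deriv.mp hg').2
  have hGcont : Continuous (fun s => g (y s)) := hgd.continuous.comp hyd.continuous
  set a : ℝ := deriv g (y t) with ha
  set D : ℝ → ℝ := fun h =>
    h * ((a - deriv g (y (t + h))) * deriv y (t + h)
      + (h / 2) * a * deriv (deriv y) (t + h)) with hD
  set Φ : ℝ → ℝ := fun h => (∫ s in t..(t + h), g (y s))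
      - (h / 2) * (2 * g (y (t + h)) - h * a * deriv y (t + h)) with hΦdef
  -- derivative of Φ
  have hΦ : ∀ h : ℝ, HasDerivAt Φ (D h) h := by
    intro h
    have hid : HasDerivAt (fun h : ℝ => t + h) 1 h := (hasDerivAt_id h).const_add t
    have h1 : HasDerivAt (fun u => ∫ s in t..u, g (y s)) (g (y (t + h))) (t + h) :=
      intervalIntegral.integral_hasDerivAt_right (hGcont.intervalIntegrable t (t + h))
        (hGcont.stronglyMeasurable.stronglyMeasurableAtFilter) hGcont.continuousAt
    have hInt : HasDerivAt (fun h : ℝ => ∫ s in t..(t + h), g (y s))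
        (g (y (t + h)) * 1) h := h1.comp h hid
    have hA : HasDerivAt (fun h : ℝ => g (y (t + h)))
        (deriv g (y (t + h)) * deriv y (t + h) * 1) h :=
      (((hgd (y (t + h))).hasDerivAt.comp (t + h) (hyd (t + h)).hasDerivAt).comp h hid)
    have hB : HasDerivAt (fun h : ℝ => deriv y (t + h))
        (deriv (deriv y) (t + h) * 1) h := (hyd2 (t + h)).hasDerivAt.comp h hid
    have hinner : HasDerivAt (fun h : ℝ => 2 * g (y (t + h)) - h * a * deriv y (t + h))
        (2 * (deriv g (y (t + h)) * deriv y (t + h) * 1)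
          - (1 * a * deriv y (t + h) + h * a * (deriv (deriv y) (t + h) * 1))) h :=
      (hA.const_mul 2).sub (((hasDerivAt_id h).mul_const a).mul hB)
    have hT : HasDerivAt Φ
        ((g (y (t + h)) * 1)
          - ((1 / 2) * (2 * g (y (t + h)) - h * a * deriv y (t + h))
            + (h / 2) * (2 * (deriv g (y (t + h)) * deriv y (t + h) * 1)
              - (1 * a * deriv y (t + h) + h * a * (deriv (deriv y) (t + h) * 1))))) h :=
      hInt.sub (((hasDerivAt_id h).div_const 2).mul hinner)
    convert hT using 1
    simp only [hD]; ring
  have hDcont : Continuous D := by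
    apply Continuous.mul continuous_id
    apply Continuous.add
    · exact ((continuous_const.sub (hg'.continuous.comp
        (hyd.continuous.comp (continuous_const.add continuous_id)))).mul
        (hy'.continuous.comp (continuous_const.add continuous_id)))
    · exact ((continuous_id.div_const 2).mul continuous_const).mul
        (hycont2.comp (continuous_const.add continuous_id))
  -- bounds on [0,1]
  obtain ⟨M₁, hM₁⟩ := (isCompact_Icc (a := (0:ℝ)) (b := 1)).exists_bound_of_continuousOn
    ((hgcont2.comp (hyd.continuous.comp (continuous_const.add continuous_id))).mul
      (hy'.continuous.comp (continuous_const.add continuous_id))).continuousOn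
  obtain ⟨M₂, hM₂⟩ := (isCompact_Icc (a := (0:ℝ)) (b := 1)).exists_bound_of_continuousOn
    (hy'.continuous.comp (continuous_const.add continuous_id)).continuousOn
  obtain ⟨M₃, hM₃⟩ := (isCompact_Icc (a := (0:ℝ)) (b := 1)).exists_bound_of_continuousOn
    (hycont2.comp (continuous_const.add continuous_id)).continuousOn
  have hM₁0 : 0 ≤ M₁ := le_trans (norm_nonneg _) (hM₁ 0 (by norm_num))
  have hM₂0 : 0 ≤ M₂ := le_trans (norm_nonneg _) (hM₂ 0 (by norm_num))
  have hM₃0 : 0 ≤ M₃ := le_trans (norm_nonneg _) (hM₃ 0 (by norm_num))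
  -- Lipschitz estimate for s ↦ deriv g (y (t+s)) on [0,1]
  have hLip : ∀ s ∈ Set.Icc (0:ℝ) 1, |a - deriv g (y (t + s))| ≤ M₁ * s := by
    intro s hs
    have key := Convex.norm_image_sub_le_of_norm_hasDerivWithin_le
      (f := fun s => deriv g (y (t + s)))
      (f' := fun s => deriv (deriv g) (y (t + s)) * deriv y (t + s) * 1)
      (s := Set.Icc (0:ℝ) 1) (C := M₁)
      (fun x hx => ((((hgd2 (y (t + x))).hasDerivAt.comp (t + x)
          (hyd (t + x)).hasDerivAt).comp x
          ((hasDerivAt_id x).const_add t)).hasDerivWithinAt))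
      (fun x hx => by simpa [mul_one] using hM₁ x hx)
      (convex_Icc 0 1) (by norm_num : (0:ℝ) ∈ Set.Icc (0:ℝ) 1) hs
    have h0 : (fun s => deriv g (y (t + s))) 0 = a := by simp [ha]
    rw [abs_sub_comm]
    calc |deriv g (y (t + s)) - a| = ‖(fun s => deriv g (y (t + s))) s
          - (fun s => deriv g (y (t + s))) 0‖ := by rw [h0]; rfl
      _ ≤ M₁ * ‖s - 0‖ := key
      _ = M₁ * s := by rw [sub_zero, Real.norm_eq_abs, abs_of_nonneg hs.1]
  refine ⟨M₁ * M₂ + |a| * M₃ + 1, 1, by positivity, one_pos, ?_⟩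
  intro Δt hΔt hΔt1
  -- FTC
  have hftc : (∫ s in (0:ℝ)..Δt, D s) = Φ Δt - Φ 0 :=
    intervalIntegral.integral_eq_sub_of_hasDerivAt (fun s _ => hΦ s)
      (hDcont.intervalIntegrable 0 Δt)
  have hΦ0 : Φ 0 = 0 := by simp [hΦdef]
  have hbound : ∀ x ∈ Set.uIoc (0:ℝ) Δt,
      ‖D x‖ ≤ (M₁ * M₂ + |a| * M₃ + 1) * Δt ^ 2 := by
    intro x hx
    rw [Set.uIoc_of_le hΔt.le] at hx
    obtain ⟨hx0, hxΔ⟩ := hx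
    have hx1 : x ∈ Set.Icc (0:ℝ) 1 := ⟨hx0.le, le_trans hxΔ hΔt1.le⟩
    have e1 : |a - deriv g (y (t + x))| ≤ M₁ * x := hLip x hx1
    have e2 : |deriv y (t + x)| ≤ M₂ := by simpa using hM₂ x hx1
    have e3 : |deriv (deriv y) (t + x)| ≤ M₃ := by simpa using hM₃ x hx1
    have hxΔ' : x ≤ Δt := hxΔ
    rw [Real.norm_eq_abs, hD]
    have : |x * ((a - deriv g (y (t + x))) * deriv y (t + x)
        + x / 2 * a * deriv (deriv y) (t + x))|
        ≤ x * (M₁ * x * M₂ + x / 2 * |a| * M₃) := by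
      rw [abs_mul, abs_of_nonneg hx0.le]
      gcongr
      calc |(a - deriv g (y (t + x))) * deriv y (t + x)
          + x / 2 * a * deriv (deriv y) (t + x)|
          ≤ |(a - deriv g (y (t + x))) * deriv y (t + x)|
            + |x / 2 * a * deriv (deriv y) (t + x)| := abs_add_le _ _
        _ ≤ M₁ * x * M₂ + x / 2 * |a| * M₃ := by
            apply add_le_add
            · rw [abs_mul]
              exact mul_le_mul e1 e2 (abs_nonneg _) (by positivity)
            · rw [abs_mul, abs_mul, abs_of_nonneg (by linarith : (0:ℝ) ≤ x / 2)]
              gcongr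
      
    refine this.trans ?_
    have hxsq : x * x ≤ Δt ^ 2 := by nlinarith
    nlinarith [abs_nonneg a, mul_nonneg hM₁0 hM₂0, mul_nonneg (abs_nonneg a) hM₃0,
      mul_nonneg hx0.le (mul_nonneg hM₁0 hM₂0), sq_nonneg Δt,
      mul_le_mul_of_nonneg_left hxsq (mul_nonneg hM₁0 hM₂0),
      mul_le_mul_of_nonneg_left hxsq (mul_nonneg (abs_nonneg a) hM₃0)]
  have hnorm := intervalIntegral.norm_integral_le_of_norm_le_const hbound
  rw [hftc, hΦ0, sub_zero] at hnorm
  have : |Φ Δt| ≤ (M₁ * M₂ + |a| * M₃ + 1) * Δt ^ 2 * Δt := by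
    simpa [Real.norm_eq_abs, abs_of_nonneg hΔt.le] using hnorm
  calc |(∫ s in t..(t + Δt), g (y s))
        - (Δt / 2) * (2 * g (y (t + Δt)) - Δt * deriv g (y t) * deriv y (t + Δt))|
      = |Φ Δt| := by rw [hΦdef]
    _ ≤ (M₁ * M₂ + |a| * M₃ + 1) * Δt ^ 2 * Δt := this
    _ = (M₁ * M₂ + |a| * M₃ + 1) * Δt ^ 3 := by ring
end

section
/- On the staggered grid, the combination (1/2)(u_i + u_{i+1}) + (1/8)(u'_i - u'_{i+1}) is a third-order accurate approximation of the midpoint value: if u : ℝ → ℝ is three times continuously differentiable, x_{i+1/2} ∈ ℝ, Δx > 0, u_i = u(x_{i+1/2} - Δx/2), u_{i+1} = u(x_{i+1/2} + Δx/2), and u'_j = Δx·u'(x_j) exactly (j = i, i+1), then (1/2)(u_i + u_{i+1}) + (1/8)(u'_i - u'_{i+1}) - u(x_{i+1/2}) = O(Δx³), i.e., bounded by C·Δx³ with C depending on sup|u'''| on the cell. -/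
/-- Third-order accuracy of the staggered midpoint reconstruction
`(u_i + u_{i+1})/2 + (u'_i - u'_{i+1})/8` where `u'_j = Δx·u'(x_j)`. -/
theorem nt_reconstruction_third_order (u : ℝ → ℝ) (xm Δx M : ℝ)
    (hΔx : 0 < Δx) (hu : ContDiff ℝ 3 u)
    (hM : ∀ x ∈ Set.Icc (xm - Δx / 2) (xm + Δx / 2), |iteratedDeriv 3 u x| ≤ M) :
    |(1 / 2) * (u (xm - Δx / 2) + u (xm + Δx / 2))
      + (1 / 8) * (Δx * deriv u (xm - Δx / 2) - Δx * deriv u (xm + Δx / 2))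
      - u xm| ≤ M * Δx ^ 3 := by
  set v := deriv u with hv
  set w := deriv v with hw
  set z := deriv w with hz
  have hu' : Differentiable ℝ u := hu.differentiable (by norm_num)
  have hu1 : ContDiff ℝ 2 v := by
    have h3 : ContDiff ℝ (2 + 1 : ℕ) u := by exact_mod_cast hu
    exact (contDiff_succ_iff_deriv.mp h3).2.2
  have hv' : Differentiable ℝ v := hu1.differentiable (by norm_num)
  have hu2 : ContDiff ℝ 1 w := by
    have h2 : ContDiff ℝ (1 + 1 : ℕ) v := by exact_mod_cast hu1
    exact (contDiff_succ_iff_deriv.mp h2).2.2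
  have hw' : Differentiable ℝ w := hu2.differentiable (by norm_num)
  have hiter : iteratedDeriv 3 u = z := by
    rw [show (3 : ℕ) = 2 + 1 from rfl, iteratedDeriv_succ,
      show (2 : ℕ) = 1 + 1 from rfl, iteratedDeriv_succ,
      show (1 : ℕ) = 0 + 1 from rfl, iteratedDeriv_succ, iteratedDeriv_zero]
  set h := Δx / 2 with hhdef
  have hh0 : 0 < h := by positivity
  have hM' : ∀ x ∈ Set.Icc (xm - h) (xm + h), |z x| ≤ M := by
    intro x hx
    rw [← hiter]
    exact hM x hx
  have hM0 : 0 ≤ M :=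
    le_trans (abs_nonneg _) (hM xm ⟨by linarith, by linarith⟩)
  set g : ℝ → ℝ := fun t =>
    (1 / 2) * (u (xm - t) + u (xm + t)) + (t / 4) * (v (xm - t) - v (xm + t)) - u xm with hg
  set g1 : ℝ → ℝ := fun t =>
    (1 / 4) * (v (xm + t) - v (xm - t)) - (t / 4) * (w (xm - t) + w (xm + t)) with hg1
  set g2 : ℝ → ℝ := fun t => (t / 4) * (z (xm - t) - z (xm + t)) with hg2
  -- derivative lemmas for shifted compositions
  have ha : ∀ t : ℝ, HasDerivAt (fun s : ℝ => xm - s) (-1) t := fun t => by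
    simpa using (hasDerivAt_id t).const_sub xm
  have hb : ∀ t : ℝ, HasDerivAt (fun s : ℝ => xm + s) 1 t := fun t =>
    (hasDerivAt_id t).const_add xm
  have hum : ∀ t : ℝ, HasDerivAt (fun s => u (xm - s)) (-(v (xm - t))) t := fun t => by
    have := (hu' (xm - t)).hasDerivAt.comp t (ha t); simp only [mul_neg, mul_one] at this; exact this
  have hup : ∀ t : ℝ, HasDerivAt (fun s => u (xm + s)) (v (xm + t)) t := fun t => by
    have := (hu' (xm + t)).hasDerivAt.comp t (hb t); simp only [mul_neg, mul_one] at this; exact this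
  have hvm : ∀ t : ℝ, HasDerivAt (fun s => v (xm - s)) (-(w (xm - t))) t := fun t => by
    have := (hv' (xm - t)).hasDerivAt.comp t (ha t); simp only [mul_neg, mul_one] at this; exact this
  have hvp : ∀ t : ℝ, HasDerivAt (fun s => v (xm + s)) (w (xm + t)) t := fun t => by
    have := (hv' (xm + t)).hasDerivAt.comp t (hb t); simp only [mul_neg, mul_one] at this; exact this
  have hwm : ∀ t : ℝ, HasDerivAt (fun s => w (xm - s)) (-(z (xm - t))) t := fun t => by
    have := (hw' (xm - t)).hasDerivAt.comp t (ha t); simp only [mul_neg, mul_one] at this; exact this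
  have hwp : ∀ t : ℝ, HasDerivAt (fun s => w (xm + s)) (z (xm + t)) t := fun t => by
    have := (hw' (xm + t)).hasDerivAt.comp t (hb t); simp only [mul_neg, mul_one] at this; exact this
  have hid4 : ∀ t : ℝ, HasDerivAt (fun s : ℝ => s / 4) (1 / 4) t := fun t => by
    simpa using (hasDerivAt_id t).div_const 4
  have hgd : ∀ t : ℝ, HasDerivAt g (g1 t) t := by
    intro t
    have H : HasDerivAt g
        ((1 / 2) * (-(v (xm - t)) + v (xm + t))
          + ((1 / 4) * (v (xm - t) - v (xm + t))
            + (t / 4) * (-(w (xm - t)) - w (xm + t)))) t := by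
      exact ((((hum t).add (hup t)).const_mul (1 / 2)).add
        ((hid4 t).mul ((hvm t).sub (hvp t)))).sub_const (u xm)
    have : (1 / 2) * (-(v (xm - t)) + v (xm + t))
          + ((1 / 4) * (v (xm - t) - v (xm + t))
            + (t / 4) * (-(w (xm - t)) - w (xm + t))) = g1 t := by
      simp only [hg1]; ring
    rwa [this] at H
  have hg1d : ∀ t : ℝ, HasDerivAt g1 (g2 t) t := by
    intro t
    have H : HasDerivAt g1
        ((1 / 4) * (w (xm + t) - -(w (xm - t)))
          - ((1 / 4) * (w (xm - t) + w (xm + t))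
            + (t / 4) * (-(z (xm - t)) + z (xm + t)))) t := by
      exact (((hvp t).sub (hvm t)).const_mul (1 / 4)).sub
        ((hid4 t).mul ((hwm t).add (hwp t)))
    have : (1 / 4) * (w (xm + t) - -(w (xm - t)))
          - ((1 / 4) * (w (xm - t) + w (xm + t))
            + (t / 4) * (-(z (xm - t)) + z (xm + t))) = g2 t := by
      simp only [hg2]; ring
    rwa [this] at H
  -- bound on g2 over [0, h]
  have hmemm : ∀ t ∈ Set.Icc (0 : ℝ) h, xm - t ∈ Set.Icc (xm - h) (xm + h) := by
    intro t ht
    exact ⟨by linarith [ht.2], by linarith [ht.1]⟩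
  have hmemp : ∀ t ∈ Set.Icc (0 : ℝ) h, xm + t ∈ Set.Icc (xm - h) (xm + h) := by
    intro t ht
    exact ⟨by linarith [ht.1], by linarith [ht.2]⟩
  have hg2b : ∀ t ∈ Set.Icc (0 : ℝ) h, ‖g2 t‖ ≤ M * h / 2 := by
    intro t ht
    have h1 := hM' _ (hmemm t ht)
    have h2 := hM' _ (hmemp t ht)
    have : |g2 t| = |t / 4| * |z (xm - t) - z (xm + t)| := by
      rw [hg2]; exact abs_mul _ _
    rw [Real.norm_eq_abs, this, abs_of_nonneg (by linarith [ht.1] : (0:ℝ) ≤ t / 4)]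
    have hzb : |z (xm - t) - z (xm + t)| ≤ 2 * M := by
      calc |z (xm - t) - z (xm + t)| ≤ |z (xm - t)| + |z (xm + t)| := abs_sub _ _
        _ ≤ 2 * M := by linarith
    calc t / 4 * |z (xm - t) - z (xm + t)| ≤ (h / 4) * (2 * M) := by
          apply mul_le_mul (by linarith [ht.2]) hzb (abs_nonneg _) (by linarith)
      _ = M * h / 2 := by ring
  -- bound on g1 over [0, h]
  have hg1b : ∀ t ∈ Set.Icc (0 : ℝ) h, ‖g1 t‖ ≤ M * h / 2 * h := by
    intro t ht
    have := Convex.norm_image_sub_le_of_norm_hasDerivWithin_le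
      (f := g1) (f' := g2) (s := Set.Icc (0 : ℝ) h) (C := M * h / 2)
      (fun s hs => (hg1d s).hasDerivWithinAt) hg2b (convex_Icc 0 h)
      (Set.left_mem_Icc.mpr hh0.le) ht
    have hg10 : g1 0 = 0 := by simp [hg1]
    have hnt : ‖t - 0‖ ≤ h := by
      rw [sub_zero, Real.norm_eq_abs, abs_of_nonneg ht.1]; exact ht.2
    rw [hg10, sub_zero] at this
    calc ‖g1 t‖ ≤ M * h / 2 * ‖t - 0‖ := this
      _ ≤ M * h / 2 * h := by
          apply mul_le_mul_of_nonneg_left hnt (by positivity)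
  -- bound on g h
  have hgb : ‖g h‖ ≤ M * h / 2 * h * h := by
    have := Convex.norm_image_sub_le_of_norm_hasDerivWithin_le
      (f := g) (f' := g1) (s := Set.Icc (0 : ℝ) h) (C := M * h / 2 * h)
      (fun s hs => (hgd s).hasDerivWithinAt) hg1b (convex_Icc 0 h)
      (Set.left_mem_Icc.mpr hh0.le) (Set.right_mem_Icc.mpr hh0.le)
    have hg0 : g 0 = 0 := by simp [hg]; ring
    rw [hg0, sub_zero] at this
    calc ‖g h‖ ≤ M * h / 2 * h * ‖h - 0‖ := this
      _ = M * h / 2 * h * h := by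
          rw [sub_zero, Real.norm_eq_abs, abs_of_nonneg hh0.le]
  -- conclude
  have hkey : (1 / 2) * (u (xm - Δx / 2) + u (xm + Δx / 2))
      + (1 / 8) * (Δx * v (xm - Δx / 2) - Δx * v (xm + Δx / 2)) - u xm = g h := by
    rw [hg, hhdef]; ring_nf
  rw [hkey]
  have : M * h / 2 * h * h ≤ M * Δx ^ 3 := by
    rw [hhdef]
    nlinarith [mul_nonneg hM0 (pow_nonneg hΔx.le 3)]
  calc |g h| ≤ M * h / 2 * h * h := hgb
    _ ≤ M * Δx ^ 3 := this
end
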